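/- Let n ≥ 1 be an integer, a, β ∈ ℝ, z ∈ ℝ^{2n} and w ∈ ℝ with (z,w) ≠ (0,0). Let J be the 2n×2n real matrix [[0, Iₙ],[−Iₙ, 0]] and let M(z,w) = |z|²·I_{2n} + a·w·J + 2·z·zᵀ − (β+4)·(|z|⁴/(|z|⁴+w²))·z·zᵀ. Then det M(z,w) = ((|z|⁴ + a²w²)^{n−1}/(|z|⁴ + w²))·(−(β+1)|z|⁸ + (a²+3)|z|⁴w² + a²w⁴). (Equation (3.13) in the proof of Lemma 3.7.) -/

import Mathlib

noncomputable section

/-- The standard symplectic matrix `J = [[0, Iₙ], [−Iₙ, 0]]` as a `2n × 2n` real matrix,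
indexed by `Fin n ⊕ Fin n`. -/
def Jmat (n : ℕ) : Matrix (Fin n ⊕ Fin n) (Fin n ⊕ Fin n) ℝ :=
  Matrix.fromBlocks 0 1 (-1) 0

/-- The matrix `M(z,w) = |z|²·I + a·w·J + 2·z·zᵀ − (β+4)(|z|⁴/(|z|⁴+w²))·z·zᵀ`. -/
def Mmat (n : ℕ) (a β : ℝ) (z : Fin n ⊕ Fin n → ℝ) (w : ℝ) :
    Matrix (Fin n ⊕ Fin n) (Fin n ⊕ Fin n) ℝ :=
  (∑ i, z i ^ 2) • (1 : Matrix (Fin n ⊕ Fin n) (Fin n ⊕ Fin n) ℝ)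
    + (a * w) • Jmat n + (2 : ℝ) • Matrix.vecMulVec z z
    - ((β + 4) * ((∑ i, z i ^ 2) ^ 2 / ((∑ i, z i ^ 2) ^ 2 + w ^ 2))) • Matrix.vecMulVec z z

open Matrix

lemma detJ (n : ℕ) : (Jmat n).det = 1 := by
  have h : Jmat n = Matrix.fromBlocks 1 1 (-1) 0 * Matrix.fromBlocks 1 0 (-1) 1 := by
    simp [Jmat, Matrix.fromBlocks_multiply]
  rw [h, Matrix.det_mul, Matrix.det_fromBlocks_one₁₁, Matrix.det_fromBlocks_zero₁₂]
  simp

lemma J_mul_J (n : ℕ) : Jmat n * Jmat n = -1 := by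
  simp [Jmat, Matrix.fromBlocks_multiply, ← Matrix.fromBlocks_one, Matrix.fromBlocks_neg]

lemma block_repr (n : ℕ) (p q : ℝ) :
    p • (1 : Matrix (Fin n ⊕ Fin n) (Fin n ⊕ Fin n) ℝ) + q • Jmat n
      = Matrix.fromBlocks (p • 1) (q • 1) (-(q • 1)) (p • 1) := by
  ext i j
  cases i <;> cases j <;>
    simp [Jmat, Matrix.one_apply, Matrix.fromBlocks, Sum.elim_inl, Sum.elim_inr]

lemma det_block (n : ℕ) (p q : ℝ) (hp : p ≠ 0) :
    (p • (1 : Matrix (Fin n ⊕ Fin n) (Fin n ⊕ Fin n) ℝ) + q • Jmat n).det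
      = (p ^ 2 + q ^ 2) ^ n := by
  rw [block_repr]
  haveI : Invertible (p • (1 : Matrix (Fin n) (Fin n) ℝ)) :=
    ⟨p⁻¹ • 1, by simp [smul_smul, inv_mul_cancel₀ hp, mul_inv_cancel₀ hp],
      by simp [smul_smul, mul_inv_cancel₀ hp, inv_mul_cancel₀ hp]⟩
  rw [Matrix.det_fromBlocks₂₂]
  have hinv : ⅟ (p • (1 : Matrix (Fin n) (Fin n) ℝ)) = p⁻¹ • 1 :=
    invOf_eq_right_inv (by simp [smul_smul, mul_inv_cancel₀ hp, inv_mul_cancel₀ hp])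
  rw [hinv]
  have h1 : (p • (1 : Matrix (Fin n) (Fin n) ℝ)) - (q • 1) * (p⁻¹ • 1) * (-(q • 1))
      = (p + q * p⁻¹ * q) • 1 := by
    simp [Matrix.smul_mul, Matrix.mul_smul, smul_smul]
    module
  rw [h1, Matrix.det_smul, Matrix.det_smul, Matrix.det_one, Fintype.card_fin]
  rw [mul_one, mul_one, ← mul_pow]
  congr 1
  rw [mul_add, show p * (q * p⁻¹ * q) = q ^ 2 * (p * p⁻¹) by ring, mul_inv_cancel₀ hp]
  ring

lemma vecMulVec_mul' {m : Type*} [Fintype m] (x y : m → ℝ) (B : Matrix m m ℝ) :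
    Matrix.vecMulVec x y * B = Matrix.vecMulVec x (y ᵥ* B) := by
  ext i j
  simp [Matrix.mul_apply, Matrix.vecMulVec_apply, Matrix.vecMul, dotProduct,
    Finset.mul_sum, mul_assoc]

lemma zJz (n : ℕ) (z : Fin n ⊕ Fin n → ℝ) : (z ᵥ* Jmat n) ⬝ᵥ z = 0 := by
  simp [Jmat, Matrix.vecMul, dotProduct, Fintype.sum_sum_type, Matrix.fromBlocks,
    Matrix.one_apply, Finset.sum_ite_eq, mul_comm]

/-- Equation (3.13): for `(z,w) ≠ (0,0)`,
`det M(z,w) = ((|z|⁴+a²w²)^{n−1}/(|z|⁴+w²))·(−(β+1)|z|⁸ + (a²+3)|z|⁴w² + a²w⁴)`. -/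
theorem det_Mmat (n : ℕ) (hn : 1 ≤ n) (a β : ℝ) (z : Fin n ⊕ Fin n → ℝ) (w : ℝ)
    (hzw : z ≠ 0 ∨ w ≠ 0) :
    (Mmat n a β z w).det
      = ((∑ i, z i ^ 2) ^ 2 + a ^ 2 * w ^ 2) ^ (n - 1) / ((∑ i, z i ^ 2) ^ 2 + w ^ 2)
          * (-(β + 1) * (∑ i, z i ^ 2) ^ 4 + (a ^ 2 + 3) * (∑ i, z i ^ 2) ^ 2 * w ^ 2
              + a ^ 2 * w ^ 4) := by
  obtain ⟨m, rfl⟩ : ∃ m, n = m + 1 := ⟨n - 1, (Nat.succ_pred_eq_of_pos hn).symm⟩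
  by_cases hz : z = 0
  · subst hz
    have hw : w ≠ 0 := hzw.resolve_left (fun h => h rfl)
    have hV : Matrix.vecMulVec (0 : Fin (m+1) ⊕ Fin (m+1) → ℝ)
        (0 : Fin (m+1) ⊕ Fin (m+1) → ℝ) = 0 := by
      ext i j; simp [Matrix.vecMulVec_apply]
    have hM : Mmat (m+1) a β 0 w = (a * w) • Jmat (m+1) := by
      simp [Mmat, hV]
    rw [hM, Matrix.det_smul, detJ, mul_one]
    simp only [Pi.zero_apply]
    rw [show (∑ _i : Fin (m+1) ⊕ Fin (m+1), (0:ℝ) ^ 2) = 0 by simp]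
    have hcard : Fintype.card (Fin (m+1) ⊕ Fin (m+1)) = (m+1) + (m+1) := by simp
    rw [hcard, show (m+1) + (m+1) = 2 * (m+1) by ring, pow_mul,
      show ((a*w)^2 : ℝ) = a^2*w^2 by ring, pow_succ,
      show (m + 1 - 1) = m from rfl]
    field_simp
    ring
  · -- main case
    set s : ℝ := ∑ i, z i ^ 2 with hs_def
    have hs : 0 < s := by
      obtain ⟨i, hi⟩ := Function.ne_iff.mp hz
      exact Finset.sum_pos' (fun j _ => sq_nonneg _)
        ⟨i, Finset.mem_univ i, pow_two_pos_of_ne_zero hi⟩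
    set d : ℝ := s ^ 2 + a ^ 2 * w ^ 2 with hd_def
    have hd : 0 < d := by positivity
    have hsw : 0 < s ^ 2 + w ^ 2 := by positivity
    set c : ℝ := 2 - (β + 4) * (s ^ 2 / (s ^ 2 + w ^ 2)) with hc_def
    set B : Matrix (Fin (m+1) ⊕ Fin (m+1)) (Fin (m+1) ⊕ Fin (m+1)) ℝ
      := s • 1 + (-(a * w)) • Jmat (m+1) with hB_def
    set u : Fin (m+1) ⊕ Fin (m+1) → ℝ := z ᵥ* B with hu_def
    have hM : Mmat (m+1) a β z w
        = (s • 1 + (a * w) • Jmat (m+1)) + c • Matrix.vecMulVec z z := by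
      rw [Mmat, hc_def]
      module
    have hAB : (s • (1 : Matrix (Fin (m+1) ⊕ Fin (m+1)) (Fin (m+1) ⊕ Fin (m+1)) ℝ)
          + (a * w) • Jmat (m+1)) * B = d • 1 := by
      rw [hB_def]
      simp only [Matrix.add_mul, Matrix.mul_add, Matrix.smul_mul, Matrix.mul_smul,
        Matrix.mul_one, Matrix.one_mul, smul_smul, J_mul_J]
      module
    have hMB : Mmat (m+1) a β z w * B = d • 1 + c • Matrix.vecMulVec z u := by
      rw [hM, Matrix.add_mul, hAB, Matrix.smul_mul, vecMulVec_mul', hu_def]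
    have hzBz : z ⬝ᵥ (Jmat (m+1) *ᵥ z) = 0 := by
      rw [Matrix.dotProduct_mulVec, zJz]
    have huz : u ⬝ᵥ z = s ^ 2 := by
      rw [hu_def, ← Matrix.dotProduct_mulVec, hB_def, Matrix.add_mulVec,
        Matrix.smul_mulVec, Matrix.smul_mulVec, Matrix.one_mulVec]
      rw [dotProduct_add, dotProduct_smul, dotProduct_smul, hzBz]
      have hzz : z ⬝ᵥ z = s := by
        simp [dotProduct, hs_def, sq]
      rw [hzz]
      simp only [smul_eq_mul, smul_zero]
      ring
    have hdetB : B.det = d ^ (m+1) := by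
      rw [hB_def, det_block (m+1) s (-(a*w)) hs.ne']
      congr 1
      rw [hd_def]; ring
    have hRHS : d • (1 : Matrix (Fin (m+1) ⊕ Fin (m+1)) (Fin (m+1) ⊕ Fin (m+1)) ℝ)
          + c • Matrix.vecMulVec z u
        = d • (1 + Matrix.replicateCol Unit ((c / d) • z) * Matrix.replicateRow Unit u) := by
      rw [← Matrix.vecMulVec_eq, smul_add]
      congr 1
      have h3 : Matrix.vecMulVec ((c / d) • z) u = (c / d) • Matrix.vecMulVec z u := by
        ext i j; simp [Matrix.vecMulVec_apply]; ring
      rw [h3, smul_smul, mul_div_cancel₀ _ hd.ne']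
    have hdet1 : (1 + Matrix.replicateCol Unit ((c / d) • z) * Matrix.replicateRow Unit u).det
        = 1 + (c / d) * s ^ 2 := by
      rw [Matrix.det_one_add_replicateCol_mul_replicateRow]
      rw [dotProduct_smul, huz, smul_eq_mul]
    have hcard : Fintype.card (Fin (m+1) ⊕ Fin (m+1)) = (m+1) + (m+1) := by simp
    have key : (Mmat (m+1) a β z w).det * d ^ (m+1)
        = d ^ ((m+1) + (m+1)) * (1 + (c / d) * s ^ 2) := by
      have hh := congrArg Matrix.det hMB
      rw [Matrix.det_mul, hdetB, hRHS, Matrix.det_smul, hdet1, hcard] at hh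
      rw [hh]
    have hdetM : (Mmat (m+1) a β z w).det = d ^ (m+1) * (1 + (c / d) * s ^ 2) := by
      apply mul_right_cancel₀ (pow_ne_zero (m+1) hd.ne')
      rw [key, pow_add]; ring
    rw [hdetM, show (m + 1 - 1) = m from rfl, pow_succ, hc_def, hd_def]
    field_simp
    ring
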